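/- Let r, d, g be integers with g ≤ r ≤ d, t ≥ 0, δE ≥ 0, and real numbers δE_i = E_i - E_0 ≥ 0 for i = 0,...,d-1 such that δE_i = 0 for i < g, 0 < δE_i ≤ δE for g ≤ i < r, and δE_i > δE for r ≤ i < d. Then (∑_{i=r}^{d-1} e^{-2tδE_i}) / (g + ∑_{i=g}^{r-1} e^{-2tδE_i} + ∑_{i=r}^{d-1} e^{-2tδE_i}) ≤ ((d-r) e^{-2tδE}) / (g + (r-g) e^{-2tδE} + (d-r) e^{-2tδE}). -/
import Mathlib


theorem ite_bound_key_inequality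
    (d g r : ℕ) (hgr : g ≤ r) (hrd : r ≤ d)
    (t δE : ℝ) (ht : 0 ≤ t) (hδE : 0 ≤ δE)
    (δ : ℕ → ℝ)
    (hzero : ∀ i, i < g → δ i = 0)
    (hmid : ∀ i, g ≤ i → i < r → 0 < δ i ∧ δ i ≤ δE)
    (htail : ∀ i, r ≤ i → i < d → δE < δ i) :
    (∑ i ∈ Finset.Ico r d, Real.exp (-2 * t * δ i)) /
        ((g : ℝ) + ∑ i ∈ Finset.Ico g r, Real.exp (-2 * t * δ i)
          + ∑ i ∈ Finset.Ico r d, Real.exp (-2 * t * δ i))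
      ≤ ((d : ℝ) - r) * Real.exp (-2 * t * δE) /
        ((g : ℝ) + ((r : ℝ) - g) * Real.exp (-2 * t * δE)
          + ((d : ℝ) - r) * Real.exp (-2 * t * δE)) := by
  rcases eq_or_lt_of_le hrd with rfl | hrd'
  · simp
  set e := Real.exp (-2 * t * δE) with he
  have hepos : 0 < e := Real.exp_pos _
  set S := ∑ i ∈ Finset.Ico r d, Real.exp (-2 * t * δ i) with hS
  set M := ∑ i ∈ Finset.Ico g r, Real.exp (-2 * t * δ i) with hM
  have hSle : S ≤ ((d:ℝ) - r) * e := by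
    calc S ≤ ∑ i ∈ Finset.Ico r d, e := by
          apply Finset.sum_le_sum
          intro i hi
          rw [Finset.mem_Ico] at hi
          exact Real.exp_le_exp.mpr
            (mul_le_mul_of_nonpos_left (htail i hi.1 hi.2).le (by linarith))
      _ = ((d:ℝ) - r) * e := by
          rw [Finset.sum_const, Nat.card_Ico, nsmul_eq_mul, Nat.cast_sub hrd]
  have hMge : ((r:ℝ) - g) * e ≤ M := by
    calc ((r:ℝ) - g) * e = ∑ i ∈ Finset.Ico g r, e := by
          rw [Finset.sum_const, Nat.card_Ico, nsmul_eq_mul, Nat.cast_sub hgr]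
      _ ≤ M := by
          apply Finset.sum_le_sum
          intro i hi
          rw [Finset.mem_Ico] at hi
          exact Real.exp_le_exp.mpr
            (mul_le_mul_of_nonpos_left (hmid i hi.1 hi.2).2 (by linarith))
  have hSpos : 0 < S :=
    Finset.sum_pos (fun i _ => Real.exp_pos _) (Finset.nonempty_Ico.mpr hrd')
  have hMnn : 0 ≤ M := Finset.sum_nonneg fun i _ => (Real.exp_pos _).le
  have hgn : (0:ℝ) ≤ (g:ℝ) := Nat.cast_nonneg g
  have hrg : (0:ℝ) ≤ ((r:ℝ) - g) := by
    have := (Nat.cast_le (α := ℝ)).mpr hgr; linarith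
  have hdr : (0:ℝ) < ((d:ℝ) - r) := by
    have := (Nat.cast_lt (α := ℝ)).mpr hrd'; linarith
  have hden1 : 0 < (g:ℝ) + M + S := by positivity
  have hden2 : 0 < (g:ℝ) + ((r:ℝ) - g) * e + ((d:ℝ) - r) * e := by positivity
  rw [div_le_div_iff₀ hden1 hden2]
  nlinarith [mul_le_mul_of_nonneg_right hSle (add_nonneg hgn (mul_nonneg hrg hepos.le)),
    mul_le_mul_of_nonneg_left hMge (mul_nonneg hdr.le hepos.le)]
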